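/- The Walrasian quantity q^W yields a strict relative payoff advantage over any other quantity in mixed profiles: for all q ≠ q^W and all integers 1 ≤ m < n, p(m·q^W + (n-m)·q)·q^W - c(q^W) > p(m·q^W + (n-m)·q)·q - c(q). -/
import Mathlib


/-- The Walrasian quantity yields a strict relative payoff advantage over any other
quantity in mixed profiles: for `q ≠ q^W` and `1 ≤ m < n`,
`p(m·q^W + (n-m)·q)·q^W - c(q^W) > p(m·q^W + (n-m)·q)·q - c(q)`. -/
theorem walrasian_relative_advantage
    (n : ℕ) (hn : 2 ≤ n) (p c : ℝ → ℝ)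
    (hp : StrictAnti p) (hc : ConvexOn ℝ (Set.Ici 0) c)
    (qW : ℝ) (hqW : 0 < qW)
    (hopt : ∀ q : ℝ, 0 ≤ q → q ≠ qW →
      p ((n : ℝ) * qW) * q - c q < p ((n : ℝ) * qW) * qW - c qW)
    (q : ℝ) (hq : 0 ≤ q) (hne : q ≠ qW)
    (m : ℕ) (hm1 : 1 ≤ m) (hmn : m < n) :
    p ((m : ℝ) * qW + ((n : ℝ) - (m : ℝ)) * q) * q - c q <
      p ((m : ℝ) * qW + ((n : ℝ) - (m : ℝ)) * q) * qW - c qW := by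
  have h0 := hopt q hq hne
  have hk : (0 : ℝ) < (n : ℝ) - (m : ℝ) := by
    have : (m : ℝ) < (n : ℝ) := by exact_mod_cast hmn
    linarith
  have key : p ((m : ℝ) * qW + ((n : ℝ) - (m : ℝ)) * q) * (q - qW)
      < p ((n : ℝ) * qW) * (q - qW) := by
    rcases lt_or_gt_of_ne hne with hlt | hgt
    · have hagg : (m : ℝ) * qW + ((n : ℝ) - (m : ℝ)) * q < (n : ℝ) * qW := by
        nlinarith
      have := hp hagg
      nlinarith
    · have hagg : (n : ℝ) * qW < (m : ℝ) * qW + ((n : ℝ) - (m : ℝ)) * q := by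
        nlinarith
      have := hp hagg
      nlinarith
  nlinarith
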